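/- arXiv:2505.02757 — 3 statements merged into one kernel-verified Lean document; each statement's English description precedes it below -/
import Mathlib

section
/- Let n ≥ 2 be an integer, let r, R be real numbers with 0 < r < R, and for j ∈ {1, …, n} define w_j : ℝⁿ → ℝ by w_j(x) = (1 − rⁿ/|x|ⁿ)·x_j. Then each w_j is harmonic on ℝⁿ \ {0}; w_j(x) = 0 for every x with |x| = r; and for every x with |x| = R, the Fréchet derivative of w_j at x applied to the outward unit normal x/|x| equals σ₂·w_j(x), where σ₂ = (Rⁿ + (n−1)rⁿ)/(R·(Rⁿ − rⁿ)). In other words, the n functions w_1, …, w_n are eigenfunctions of the Steklov–Dirichlet problem on the spherical shell A_{r,R} with eigenvalue σ₂(A_{r,R}) = (Rⁿ + (n−1)rⁿ)/(R(Rⁿ − rⁿ)). -/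
open EuclideanSpace in
lemma norm_hasFDerivAt {E : Type*} [NormedAddCommGroup E] [InnerProductSpace ℝ E]
    {x : E} (hx : x ≠ 0) :
    HasFDerivAt (fun y : E => ‖y‖) (‖x‖⁻¹ • innerSL ℝ x) x := by
  have hx' : ‖x‖ ≠ 0 := norm_ne_zero_iff.2 hx
  have hs : HasFDerivAt (fun y : E => ‖y‖ ^ 2) (2 • innerSL ℝ x) x :=
    (hasStrictFDerivAt_norm_sq x).hasFDerivAt
  have h2 : HasDerivAt Real.sqrt (1 / (2 * Real.sqrt (‖x‖^2))) (‖x‖^2) :=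
    Real.hasDerivAt_sqrt (by positivity)
  have h3 := h2.comp_hasFDerivAt x hs
  have hfun : (Real.sqrt ∘ fun y : E => ‖y‖^2) = fun y : E => ‖y‖ :=
    funext fun y => Real.sqrt_sq (norm_nonneg y)
  rw [hfun] at h3
  refine h3.congr_fderiv (Eq.symm ?_)
  ext v
  simp [Real.sqrt_sq (norm_nonneg x), smul_smul]
  field_simp

lemma normPowInv_hasFDerivAt {E : Type*} [NormedAddCommGroup E] [InnerProductSpace ℝ E]
    {m : ℕ} (hm : 1 ≤ m) {x : E} (hx : x ≠ 0) :
    HasFDerivAt (fun y : E => (‖y‖ ^ m)⁻¹) ((-(m:ℝ) / ‖x‖ ^ (m+2)) • innerSL ℝ x) x := by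
  have hx' : ‖x‖ ≠ 0 := norm_ne_zero_iff.2 hx
  have h1 : HasDerivAt (fun t : ℝ => (t ^ m)⁻¹)
      (-((m:ℝ) * ‖x‖ ^ (m-1)) / (‖x‖ ^ m) ^ 2) ‖x‖ :=
    (hasDerivAt_pow m ‖x‖).inv (pow_ne_zero m hx')
  have h3 := h1.comp_hasFDerivAt x (norm_hasFDerivAt hx)
  have : ((fun t : ℝ => (t ^ m)⁻¹) ∘ fun y : E => ‖y‖) = fun y : E => (‖y‖ ^ m)⁻¹ := rfl
  rw [this] at h3
  refine h3.congr_fderiv (Eq.symm ?_)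
  rw [smul_smul]
  congr 1
  obtain ⟨k, rfl⟩ : ∃ k, m = k + 1 := ⟨m - 1, (Nat.succ_pred_eq_of_pos hm).symm⟩
  simp only [Nat.add_sub_cancel]
  field_simp
  ring

open EuclideanSpace in
lemma proj_hasFDerivAt {n : ℕ} (j : Fin n) (x : EuclideanSpace ℝ (Fin n)) :
    HasFDerivAt (fun y : EuclideanSpace ℝ (Fin n) => y j)
      (EuclideanSpace.proj j : EuclideanSpace ℝ (Fin n) →L[ℝ] ℝ) x :=
  (EuclideanSpace.proj j : EuclideanSpace ℝ (Fin n) →L[ℝ] ℝ).hasFDerivAt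

open EuclideanSpace in
lemma coeff_hasFDerivAt {n : ℕ} {m : ℕ} (hm : 1 ≤ m) (c : ℝ)
    {x : EuclideanSpace ℝ (Fin n)} (hx : x ≠ 0) :
    HasFDerivAt (fun y : EuclideanSpace ℝ (Fin n) => 1 - c * (‖y‖ ^ m)⁻¹)
      ((c * m / ‖x‖ ^ (m + 2)) • innerSL ℝ x) x := by
  have h := ((normPowInv_hasFDerivAt hm hx).const_mul c).const_sub 1
  refine h.congr_fderiv (Eq.symm ?_)
  ext v
  simp
  ring

open EuclideanSpace in
lemma w_hasFDerivAt {n : ℕ} (hn : 1 ≤ n) (c : ℝ) (j : Fin n)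
    {x : EuclideanSpace ℝ (Fin n)} (hx : x ≠ 0) :
    ∃ D : EuclideanSpace ℝ (Fin n) →L[ℝ] ℝ,
      HasFDerivAt (fun y : EuclideanSpace ℝ (Fin n) => (1 - c * (‖y‖ ^ n)⁻¹) * y j) D x ∧
      ∀ v, D v = (1 - c * (‖x‖ ^ n)⁻¹) * v j
        + c * n * (‖x‖ ^ (n + 2))⁻¹ * x j * (inner ℝ x v : ℝ) := by
  have h := (coeff_hasFDerivAt hn c hx).mul (proj_hasFDerivAt j x)
  refine ⟨_, h, fun v => ?_⟩
  simp
  ring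

open EuclideanSpace in
lemma h_hasFDerivAt {n : ℕ} (hn : 1 ≤ n) (c δ : ℝ) (j i : Fin n)
    {x : EuclideanSpace ℝ (Fin n)} (hx : x ≠ 0) :
    ∃ D : EuclideanSpace ℝ (Fin n) →L[ℝ] ℝ,
      HasFDerivAt (fun y : EuclideanSpace ℝ (Fin n) =>
          (1 - c * (‖y‖ ^ n)⁻¹) * δ + c * (n : ℝ) * ((‖y‖ ^ (n + 2))⁻¹ * (y j * y i))) D x ∧
      ∀ v, D v = c * n / ‖x‖ ^ (n + 2) * δ * (inner ℝ x v : ℝ)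
        + c * n * ((-((n : ℝ) + 2) / ‖x‖ ^ (n + 4)) * (inner ℝ x v : ℝ) * (x j * x i)
          + (‖x‖ ^ (n + 2))⁻¹ * (v j * x i + x j * v i)) := by
  have h1 := (coeff_hasFDerivAt hn c hx).mul_const δ
  have h2 := ((normPowInv_hasFDerivAt (m := n + 2) (by omega) hx).mul
    ((proj_hasFDerivAt j x).mul (proj_hasFDerivAt i x))).const_mul (c * (n : ℝ))
  have h := h1.add h2
  refine ⟨_, h, fun v => ?_⟩
  simp

  ring

/-- The functions `w_j(x) = (1 − rⁿ/‖x‖ⁿ)·x_j`, `j = 1, …, n`, are eigenfunctions of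
the Steklov–Dirichlet problem on the spherical shell `A_{r,R}` with eigenvalue
`σ₂(A_{r,R}) = (Rⁿ + (n−1)rⁿ)/(R(Rⁿ − rⁿ))`: each `w_j` is harmonic on `ℝⁿ \ {0}`
(twice continuously differentiable with vanishing Laplacian), vanishes on the inner
sphere `‖x‖ = r`, and on the outer sphere `‖x‖ = R` its Fréchet derivative in the
direction of the outward unit normal `x/‖x‖` equals `σ₂ · w_j(x)`. -/
theorem stmt2 (n : ℕ) (hn : 2 ≤ n) (r R : ℝ) (hr : 0 < r) (hrR : r < R)
    (w : Fin n → EuclideanSpace ℝ (Fin n) → ℝ)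
    (hw : ∀ j x, w j x = (1 - r ^ n / ‖x‖ ^ n) * x j) :
    (∀ j, ContDiffOn ℝ 2 (w j) {x : EuclideanSpace ℝ (Fin n) | x ≠ 0}) ∧
    (∀ j, ∀ x : EuclideanSpace ℝ (Fin n), x ≠ 0 →
      ∑ i : Fin n,
        fderiv ℝ (fun y => fderiv ℝ (w j) y (EuclideanSpace.single i (1 : ℝ))) x
          (EuclideanSpace.single i (1 : ℝ)) = 0) ∧
    (∀ j, ∀ x : EuclideanSpace ℝ (Fin n), ‖x‖ = r → w j x = 0) ∧
    (∀ j, ∀ x : EuclideanSpace ℝ (Fin n), ‖x‖ = R →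
      fderiv ℝ (w j) x (‖x‖⁻¹ • x) =
        (R ^ n + ((n : ℝ) - 1) * r ^ n) / (R * (R ^ n - r ^ n)) * w j x) := by
  have hn1 : 1 ≤ n := by omega
  set c : ℝ := r ^ n with hc
  have hweq : ∀ j, w j = fun y : EuclideanSpace ℝ (Fin n) => (1 - c * (‖y‖ ^ n)⁻¹) * y j := by
    intro j
    funext y
    rw [hw, div_eq_mul_inv]
  -- the fderiv evaluation, valid at every nonzero point
  have hfd : ∀ (j : Fin n) (x : EuclideanSpace ℝ (Fin n)), x ≠ 0 → ∀ v,
      fderiv ℝ (w j) x v = (1 - c * (‖x‖ ^ n)⁻¹) * v j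
        + c * n * (‖x‖ ^ (n + 2))⁻¹ * x j * (inner ℝ x v : ℝ) := by
    intro j x hx v
    obtain ⟨D, hD, hDv⟩ := w_hasFDerivAt hn1 c j hx
    rw [hweq j, hD.fderiv, hDv]
  refine ⟨?_, ?_, ?_, ?_⟩
  · -- ContDiffOn
    intro j
    rw [hweq j]
    intro x hx
    have hx' : ‖x‖ ≠ 0 := norm_ne_zero_iff.2 hx
    apply ContDiffAt.contDiffWithinAt
    exact (contDiffAt_const.sub (contDiffAt_const.mul
      (((contDiffAt_norm ℝ hx).pow n).inv (pow_ne_zero n hx')))).mul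
      ((EuclideanSpace.proj j : EuclideanSpace ℝ (Fin n) →L[ℝ] ℝ).contDiff.contDiffAt)
  · -- Laplacian
    intro j x hx
    have hx' : ‖x‖ ≠ 0 := norm_ne_zero_iff.2 hx
    have key : ∀ i : Fin n,
        fderiv ℝ (fun y => fderiv ℝ (w j) y (EuclideanSpace.single i (1 : ℝ))) x
          (EuclideanSpace.single i (1 : ℝ))
        = (c * n / ‖x‖ ^ (n + 2) * (if j = i then (1:ℝ) else 0)) * x i
          + c * n * ((-((n : ℝ) + 2) / ‖x‖ ^ (n + 4)) * x i * (x j * x i)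
            + (‖x‖ ^ (n + 2))⁻¹ * ((if j = i then (1:ℝ) else 0) * x i + x j * 1)) := by
      intro i
      set δ : ℝ := if j = i then (1:ℝ) else 0 with hδ
      have hEE : (fun y => fderiv ℝ (w j) y (EuclideanSpace.single i (1 : ℝ)))
          =ᶠ[nhds x] (fun y : EuclideanSpace ℝ (Fin n) =>
            (1 - c * (‖y‖ ^ n)⁻¹) * δ + c * (n : ℝ) * ((‖y‖ ^ (n + 2))⁻¹ * (y j * y i))) := by
        filter_upwards [IsOpen.mem_nhds (isOpen_compl_singleton) hx] with y hy
        have hy' : y ≠ 0 := hy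
        rw [hfd j y hy']
        have h1 : (EuclideanSpace.single i (1 : ℝ)) j = δ := by
          rw [EuclideanSpace.single_apply]
        have h2 : (inner ℝ y (EuclideanSpace.single i (1 : ℝ)) : ℝ) = y i := by
          rw [EuclideanSpace.inner_single_right]
          simp
        rw [h1, h2]
        ring
      rw [hEE.fderiv_eq]
      obtain ⟨D, hD, hDv⟩ := h_hasFDerivAt hn1 c δ j i hx
      rw [hD.fderiv, hDv]
      have h2 : (inner ℝ x (EuclideanSpace.single i (1 : ℝ)) : ℝ) = x i := by
        rw [EuclideanSpace.inner_single_right]; simp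
      have h1 : (EuclideanSpace.single i (1 : ℝ)) j = δ := by
        rw [EuclideanSpace.single_apply]
      have h3 : (EuclideanSpace.single i (1 : ℝ)) i = 1 := by
        simp
      rw [h1, h2, h3]
    rw [Finset.sum_congr rfl (fun i _ => key i)]
    have hsum : ∑ i : Fin n, x i ^ 2 = ‖x‖ ^ 2 := by
      rw [← real_inner_self_eq_norm_sq]
      rw [PiLp.inner_apply]
      simp [pow_two]
    have expand : ∀ i : Fin n,
        (c * n / ‖x‖ ^ (n + 2) * (if j = i then (1:ℝ) else 0)) * x i
          + c * n * ((-((n : ℝ) + 2) / ‖x‖ ^ (n + 4)) * x i * (x j * x i)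
            + (‖x‖ ^ (n + 2))⁻¹ * ((if j = i then (1:ℝ) else 0) * x i + x j * 1))
        = (if j = i then (c * n / ‖x‖ ^ (n + 2) + c * n * (‖x‖ ^ (n + 2))⁻¹) * x i else 0)
          + (c * n * (-((n : ℝ) + 2) / ‖x‖ ^ (n + 4)) * x j) * x i ^ 2
          + c * n * (‖x‖ ^ (n + 2))⁻¹ * x j := by
      intro i
      by_cases h : j = i
      · subst h; rw [if_pos rfl, if_pos rfl]; ring
      · simp only [if_neg h]; ring
    rw [Finset.sum_congr rfl (fun i _ => expand i)]
    rw [Finset.sum_add_distrib, Finset.sum_add_distrib, Finset.sum_ite_eq,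
      if_pos (Finset.mem_univ j), ← Finset.mul_sum]
    simp only [← pow_two]
    rw [hsum, Finset.sum_const, Finset.card_univ, Fintype.card_fin, nsmul_eq_mul]
    field_simp
    ring
  · -- inner boundary
    intro j x hx
    rw [hw, hx, div_self (pow_ne_zero n hr.ne'), sub_self, zero_mul]
  · -- outer boundary
    intro j x hx
    have hR : 0 < R := hr.trans hrR
    have hx0 : x ≠ 0 := by
      intro h; rw [h, norm_zero] at hx; exact hR.ne' hx.symm
    have hx' : ‖x‖ ≠ 0 := norm_ne_zero_iff.2 hx0
    rw [hfd j x hx0, hw]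
    have h1 : ((‖x‖⁻¹ • x : EuclideanSpace ℝ (Fin n)) j) = ‖x‖⁻¹ * x j := rfl
    have h2 : (inner ℝ x (‖x‖⁻¹ • x) : ℝ) = ‖x‖⁻¹ * ‖x‖ ^ 2 := by
      rw [real_inner_smul_right, real_inner_self_eq_norm_sq]
    rw [h1, h2, hx, hc]
    have hRn : R ^ n ≠ 0 := pow_ne_zero n hR.ne'
    have hsub : R ^ n - r ^ n ≠ 0 := by
      have : r ^ n < R ^ n := pow_lt_pow_left₀ hrR hr.le (by omega)
      linarith
    field_simp
    ring
end

section
/- Let n ≥ 2 be an integer and R > 0. Define g : [0, R) → ℝ by g(r) = (Rⁿ + (n−1)rⁿ)/(R·(Rⁿ − rⁿ)). Then g is differentiable on (0, R) with derivative g′(r) = n²·R^{n−1}·r^{n−1}/(Rⁿ − rⁿ)² > 0 for every r ∈ (0, R), and g is strictly monotone increasing on [0, R). In other words, the second Steklov–Dirichlet eigenvalue σ₂(A_{r,R}) of the spherical shell is strictly increasing with respect to the inner radius r ∈ [0, R). -/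
/-- The second Steklov–Dirichlet eigenvalue of the spherical shell,
`g(r) = (Rⁿ + (n−1)rⁿ)/(R·(Rⁿ − rⁿ))`, is differentiable on `(0, R)` with derivative
`g′(r) = n²·R^{n−1}·r^{n−1}/(Rⁿ − rⁿ)² > 0`, and is strictly monotone increasing on
`[0, R)` (with `g(0) = 1/R`). -/
theorem stmt5 (n : ℕ) (hn : 2 ≤ n) (R : ℝ) (hR : 0 < R)
    (g : ℝ → ℝ)
    (hg : ∀ r, g r = (R ^ n + ((n : ℝ) - 1) * r ^ n) / (R * (R ^ n - r ^ n))) :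
    (∀ r ∈ Set.Ioo (0 : ℝ) R,
      HasDerivAt g ((n : ℝ) ^ 2 * R ^ (n - 1) * r ^ (n - 1) / (R ^ n - r ^ n) ^ 2) r ∧
      0 < (n : ℝ) ^ 2 * R ^ (n - 1) * r ^ (n - 1) / (R ^ n - r ^ n) ^ 2) ∧
    StrictMonoOn g (Set.Ico 0 R) := by
  obtain ⟨m, rfl⟩ : ∃ m, n = m + 1 := ⟨n - 1, by omega⟩
  have hm : 1 ≤ m := by omega
  set n := m + 1 with hn'
  have hgfun : g = fun r => (R ^ n + ((n : ℝ) - 1) * r ^ n) / (R * (R ^ n - r ^ n)) :=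
    funext hg
  have hsub : ∀ r ∈ Set.Ico (0 : ℝ) R, (0 : ℝ) < R ^ n - r ^ n := by
    intro r hr
    have : r ^ n < R ^ n := pow_lt_pow_left₀ hr.2 hr.1 (by omega)
    linarith
  have hne : ∀ r ∈ Set.Ico (0 : ℝ) R, R * (R ^ n - r ^ n) ≠ 0 := by
    intro r hr
    exact mul_ne_zero hR.ne' (hsub r hr).ne'
  have hderiv : ∀ r ∈ Set.Ioo (0 : ℝ) R,
      HasDerivAt g ((n : ℝ) ^ 2 * R ^ (n - 1) * r ^ (n - 1) / (R ^ n - r ^ n) ^ 2) r := by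
    intro r hr
    have hr' : r ∈ Set.Ico (0 : ℝ) R := ⟨hr.1.le, hr.2⟩
    have h1 : HasDerivAt (fun r : ℝ => R ^ n + ((n : ℝ) - 1) * r ^ n)
        (((n : ℝ) - 1) * ((n : ℝ) * r ^ (n - 1))) r :=
      (((hasDerivAt_pow n r)).const_mul _).const_add _
    have h2 : HasDerivAt (fun r : ℝ => R * (R ^ n - r ^ n))
        (R * (0 - (n : ℝ) * r ^ (n - 1))) r := by
      exact ((hasDerivAt_const r (R ^ n)).sub (hasDerivAt_pow n r)).const_mul _
    have h := h1.div h2 (hne r hr')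
    rw [hgfun]
    refine h.congr_deriv ?_
    have hd := (hsub r hr').ne'
    have hmn : n - 1 = m := by omega
    simp only [hmn, hn', Nat.add_sub_cancel, pow_succ, Nat.cast_add, Nat.cast_one] at *
    field_simp
    ring
  have hpos : ∀ r ∈ Set.Ioo (0 : ℝ) R,
      0 < (n : ℝ) ^ 2 * R ^ (n - 1) * r ^ (n - 1) / (R ^ n - r ^ n) ^ 2 := by
    intro r hr
    have hd := hsub r ⟨hr.1.le, hr.2⟩
    have hr0 : (0:ℝ) < r := hr.1
    have hn0 : (0 : ℝ) < (n : ℝ) := by exact_mod_cast Nat.pos_of_ne_zero (by omega)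
    positivity
  refine ⟨fun r hr => ⟨hderiv r hr, hpos r hr⟩, ?_⟩
  have hcont : ContinuousOn g (Set.Ico 0 R) := by
    rw [hgfun]
    apply ContinuousOn.div
    · fun_prop
    · fun_prop
    · exact hne
  apply strictMonoOn_of_deriv_pos (convex_Ico 0 R) hcont
  intro x hx
  rw [interior_Ico] at hx
  rw [(hderiv x hx).deriv]
  exact hpos x hx
end

section
/- Let n ≥ 3 be an integer and let 0 < r < ε. Define ρ : ℝⁿ \ {0} → ℝ by ρ(x) = (r^{2−n} − |x|^{2−n})/(r^{2−n} − ε^{2−n}). Then for every x in the annulus A_{r,ε} = {x ∈ ℝⁿ : r < |x| < ε}, the gradient of ρ at x equals (n−2)·x/(|x|ⁿ·(r^{2−n} − ε^{2−n})), and ∫_{A_{r,ε}} ‖∇ρ(x)‖² dx = n·ω_n·(n−2)/(r^{2−n} − ε^{2−n}), where ω_n is the Lebesgue measure of the unit ball in ℝⁿ. Consequently, if Ω₀ ⊆ ℝⁿ is an open bounded set containing the origin, (r_ε)_{ε>0} is a family with 0 < r_ε < ε and r_ε/ε^{n/(n−2)} → 0 as ε → 0⁺, and ω^ε : ℝⁿ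 → ℝ is defined by ω^ε(x) = 0 for |x| ≤ r_ε, ω^ε(x) = ρ(x) (with r = r_ε) for r_ε < |x| < ε, and ω^ε(x) = 1 for |x| ≥ ε, then ∫_{Ω₀} ‖∇ω^ε(x)‖² dx → 0 and ∫_{Ω₀} (ω^ε(x))² dx → |Ω₀| as ε → 0⁺. -/
open Filter MeasureTheory Metric Set InnerProductSpace

noncomputable section

lemma aux_hasGradientAt_norm_rpow {n : ℕ} (a : ℝ) (x : EuclideanSpace ℝ (Fin n))
    (hx : x ≠ 0) :
    HasGradientAt (fun y : EuclideanSpace ℝ (Fin n) => ‖y‖ ^ a)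
      ((a * ‖x‖ ^ (a - 2)) • x) x := by
  have hx2 : (‖x‖ ^ 2 : ℝ) ≠ 0 := by
    have : (0:ℝ) < ‖x‖ := norm_pos_iff.2 hx
    positivity
  have hf : HasFDerivAt (fun y : EuclideanSpace ℝ (Fin n) => ‖y‖ ^ 2)
      (2 • (innerSL ℝ x)) x := (hasStrictFDerivAt_norm_sq x).hasFDerivAt
  have hg : HasDerivAt (fun t : ℝ => t ^ (a/2)) ((a/2) * (‖x‖^2 : ℝ) ^ (a/2 - 1)) (‖x‖^2) :=
    Real.hasDerivAt_rpow_const (Or.inl hx2)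
  have hcomp := hg.comp_hasFDerivAt x hf
  have hfun : ((fun t : ℝ => t ^ (a/2)) ∘ (fun y : EuclideanSpace ℝ (Fin n) => ‖y‖ ^ 2))
      = fun y : EuclideanSpace ℝ (Fin n) => ‖y‖ ^ a := by
    funext y
    simp only [Function.comp]
    rw [← Real.rpow_natCast ‖y‖ 2, ← Real.rpow_mul (norm_nonneg _)]
    congr 1
    push_cast
    ring
  rw [hfun] at hcomp
  have hclm : ((a/2) * (‖x‖^2 : ℝ) ^ (a/2 - 1)) • (2 • (innerSL ℝ x))
      = toDual ℝ (EuclideanSpace ℝ (Fin n)) ((a * ‖x‖ ^ (a - 2)) • x) := by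
    ext y
    simp only [ContinuousLinearMap.smul_apply, innerSL_apply_apply, toDual_apply_apply,
      real_inner_smul_left, smul_eq_mul]
    have h2 : ((‖x‖ ^ 2 : ℝ)) ^ (a/2 - 1) = ‖x‖ ^ (a - 2) := by
      rw [← Real.rpow_natCast ‖x‖ 2, ← Real.rpow_mul (norm_nonneg _)]
      congr 1
      push_cast
      ring
    rw [h2]; ring
  rw [hclm] at hcomp
  simpa using hcomp.hasGradientAt

lemma aux_hasGradientAt_rho {n : ℕ} (r ε : ℝ) (x : EuclideanSpace ℝ (Fin n))
    (hx : x ≠ 0) :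
    HasGradientAt (fun y : EuclideanSpace ℝ (Fin n) =>
        (r ^ (2 - (n : ℝ)) - ‖y‖ ^ (2 - (n : ℝ)))
          / (r ^ (2 - (n : ℝ)) - ε ^ (2 - (n : ℝ))))
      ((((n : ℝ) - 2) / (‖x‖ ^ n * (r ^ (2 - (n : ℝ)) - ε ^ (2 - (n : ℝ))))) • x) x := by
  set D : ℝ := r ^ (2 - (n : ℝ)) - ε ^ (2 - (n : ℝ)) with hD
  have h1 := aux_hasGradientAt_norm_rpow (n := n) (2 - (n:ℝ)) x hx
  have h2 := ((hasFDerivAt_const (r ^ (2 - (n : ℝ))) x).sub h1.hasFDerivAt).const_mul D⁻¹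
  rw [hasGradientAt_iff_hasFDerivAt]
  simp only [div_eq_inv_mul]
  convert h2 using 1
  · rfl
  · rfl
  ext y
  have hpow : ‖x‖ ^ ((2 - (n:ℝ)) - 2) = (‖x‖ ^ n)⁻¹ := by
    rw [show (2 - (n:ℝ)) - 2 = -(n:ℝ) by ring, Real.rpow_neg (norm_nonneg x),
      Real.rpow_natCast]
  simp only [ContinuousLinearMap.smul_apply, ContinuousLinearMap.sub_apply,
    hasFDerivAt_const, ContinuousLinearMap.coe_sub', Pi.sub_apply, toDual_apply_apply,
    real_inner_smul_left, smul_eq_mul, ContinuousLinearMap.coe_smul', Pi.smul_apply,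
    ContinuousLinearMap.zero_apply]
  rw [hpow, mul_inv]
  ring_nf

lemma aux_dim_pos {n : ℕ} (hn : 3 ≤ n) : Nontrivial (EuclideanSpace ℝ (Fin n)) := by
  have : 0 < Module.finrank ℝ (EuclideanSpace ℝ (Fin n)) := by
    rw [finrank_euclideanSpace_fin]; omega
  exact Module.nontrivial_of_finrank_pos this

lemma aux_energy {n : ℕ} (hn : 3 ≤ n) {r ε : ℝ} (hr : 0 < r) (hre : r < ε) :
    ∫ x in {y : EuclideanSpace ℝ (Fin n) | r < ‖y‖ ∧ ‖y‖ < ε},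
        ‖((((n : ℝ) - 2) / (‖x‖ ^ n * (r ^ (2 - (n : ℝ)) - ε ^ (2 - (n : ℝ))))) • x :
          EuclideanSpace ℝ (Fin n))‖ ^ 2
      = (n : ℝ) * (volume (Metric.ball (0 : EuclideanSpace ℝ (Fin n)) 1)).toReal
          * ((n : ℝ) - 2) / (r ^ (2 - (n : ℝ)) - ε ^ (2 - (n : ℝ))) := by
  haveI := aux_dim_pos hn
  have hn3 : (3:ℝ) ≤ (n:ℝ) := by exact_mod_cast hn
  set D : ℝ := r ^ (2 - (n : ℝ)) - ε ^ (2 - (n : ℝ)) with hDdef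
  have hDpos : 0 < D := sub_pos.2 (Real.rpow_lt_rpow_of_neg hr hre (by linarith))
  set K : ℝ := (((n:ℝ) - 2) / D) ^ 2 with hKdef
  set A : Set (EuclideanSpace ℝ (Fin n)) := {y | r < ‖y‖ ∧ ‖y‖ < ε} with hAdef
  have hAmeas : MeasurableSet A :=
    measurable_norm (measurableSet_Ioo (a := r) (b := ε))
  -- step 1 : replace integrand by closed form
  have step1 : ∫ x in A,
      ‖((((n : ℝ) - 2) / (‖x‖ ^ n * D)) • x : EuclideanSpace ℝ (Fin n))‖ ^ 2
      = ∫ x in A, K * ‖x‖ ^ ((2:ℝ) - 2 * (n:ℝ)) := by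
    refine setIntegral_congr_fun hAmeas (fun x hx => ?_)
    have ht : 0 < ‖x‖ := lt_trans hr hx.1
    have hz : (‖x‖ ^ n : ℝ) ≠ 0 := by positivity
    have e1 : ‖x‖ ^ ((2:ℝ) - 2 * (n:ℝ)) = (‖x‖ ^ 2) * ((‖x‖ ^ n) ^ 2)⁻¹ := by
      rw [show (2:ℝ) - 2 * (n:ℝ) = ((2:ℕ):ℝ) + (-(((n * 2 : ℕ)):ℝ)) by push_cast; ring,
        Real.rpow_add ht, Real.rpow_natCast, Real.rpow_neg ht.le, Real.rpow_natCast,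
        pow_mul]
    have hD0 : D ≠ 0 := ne_of_gt hDpos
    rw [norm_smul, mul_pow, Real.norm_eq_abs, sq_abs, e1, hKdef, div_pow, div_pow, mul_pow]
    field_simp
  rw [step1]
  -- step 2 : polar coordinates
  set G : ℝ → ℝ := fun t => K * t ^ ((2:ℝ) - 2 * (n:ℝ)) with hGdef
  have step2 : ∫ x in A, K * ‖x‖ ^ ((2:ℝ) - 2 * (n:ℝ))
      = ∫ x : EuclideanSpace ℝ (Fin n), (Set.Ioo r ε).indicator G ‖x‖ := by
    rw [← integral_indicator hAmeas]
    congr 1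
  rw [step2, MeasureTheory.integral_fun_norm_addHaar volume ((Set.Ioo r ε).indicator G),
    finrank_euclideanSpace_fin]
  -- step 3 : reduce radial integral to Ioo r ε
  have step3 : ∫ y in Set.Ioi (0:ℝ), y ^ (n - 1) • (Set.Ioo r ε).indicator G y
      = ∫ y in Set.Ioo r ε, y ^ (n - 1) * G y := by
    have : (fun y : ℝ => y ^ (n - 1) • (Set.Ioo r ε).indicator G y)
        = (Set.Ioo r ε).indicator (fun y => y ^ (n - 1) * G y) := by
      funext y
      by_cases hy : y ∈ Set.Ioo r ε
      · rw [Set.indicator_of_mem hy, Set.indicator_of_mem hy, smul_eq_mul]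
      · rw [Set.indicator_of_notMem hy, Set.indicator_of_notMem hy, smul_zero]
    rw [this, setIntegral_indicator measurableSet_Ioo,
      Set.inter_eq_self_of_subset_right
        (Set.Ioo_subset_Ioi_self.trans (Set.Ioi_subset_Ioi hr.le))]
  rw [step3]
  -- step 4 : the radial integrand
  have step4 : ∫ y in Set.Ioo r ε, y ^ (n - 1) * G y
      = ∫ y in Set.Ioo r ε, K * y ^ ((1:ℝ) - (n:ℝ)) := by
    refine setIntegral_congr_fun measurableSet_Ioo (fun y hy => ?_)
    have hy0 : 0 < y := lt_trans hr hy.1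
    have : (y : ℝ) ^ (n - 1) = y ^ (((n:ℝ) - 1)) := by
      rw [← Real.rpow_natCast y (n - 1)]
      congr 1
      have : 1 ≤ n := by omega
      push_cast [Nat.cast_sub this]
      ring
    calc y ^ (n - 1) * G y
        = K * (y ^ (((n:ℝ) - 1)) * y ^ ((2:ℝ) - 2 * (n:ℝ))) := by rw [hGdef, this]; ring
      _ = K * y ^ ((1:ℝ) - (n:ℝ)) := by
          rw [← Real.rpow_add hy0]
          congr 1
          ring
  rw [step4]
  -- step 5 : compute
  have h0 : (0:ℝ) ∉ Set.uIcc r ε := by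
    rw [Set.uIcc_of_le hre.le]
    intro h
    exact absurd h.1 (by linarith)
  have hne : (1:ℝ) - (n:ℝ) ≠ -1 := by intro h; norm_num at h; linarith
  have step5 : ∫ y in Set.Ioo r ε, K * y ^ ((1:ℝ) - (n:ℝ)) = K * (D / ((n:ℝ) - 2)) := by
    rw [MeasureTheory.integral_const_mul, ← MeasureTheory.integral_Ioc_eq_integral_Ioo,
      ← intervalIntegral.integral_of_le hre.le, integral_rpow (Or.inr ⟨hne, h0⟩)]
    rw [show (1:ℝ) - (n:ℝ) + 1 = 2 - (n:ℝ) by ring]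
    rw [hDdef]
    congr 1
    rw [div_eq_div_iff (by intro h; linarith : (2:ℝ) - (n:ℝ) ≠ 0)
      (by intro h; linarith : (n:ℝ) - 2 ≠ 0)]
    ring
  rw [step5]
  have hD0 : D ≠ 0 := ne_of_gt hDpos
  have hn2 : (n:ℝ) - 2 ≠ 0 := by linarith
  rw [hKdef]
  rw [nsmul_eq_mul, smul_eq_mul, measureReal_def]
  field_simp

lemma aux_gradient_congr {n : ℕ} {f g : EuclideanSpace ℝ (Fin n) → ℝ}
    {x : EuclideanSpace ℝ (Fin n)} (h : f =ᶠ[nhds x] g) :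
    gradient f x = gradient g x := by
  unfold gradient
  rw [h.fderiv_eq]

lemma aux_integrableOn {n : ℕ} {r ε D : ℝ} (hr : 0 < r) (hre : r < ε) (hD : D ≠ 0) :
    IntegrableOn (fun x : EuclideanSpace ℝ (Fin n) =>
        ‖((((n : ℝ) - 2) / (‖x‖ ^ n * D)) • x : EuclideanSpace ℝ (Fin n))‖ ^ 2)
      {y : EuclideanSpace ℝ (Fin n) | r < ‖y‖ ∧ ‖y‖ < ε} := by
  set S : Set (EuclideanSpace ℝ (Fin n)) :=
    Metric.closedBall (0 : EuclideanSpace ℝ (Fin n)) ε \ Metric.ball 0 r with hSdef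
  have hS : IsCompact S := (isCompact_closedBall _ _).diff Metric.isOpen_ball
  have hnorm : ∀ x ∈ S, r ≤ ‖x‖ := by
    intro x hx
    have := hx.2
    rw [Metric.mem_ball, dist_zero_right, not_lt] at this
    exact this
  have hcont : ContinuousOn (fun x : EuclideanSpace ℝ (Fin n) =>
      ‖((((n : ℝ) - 2) / (‖x‖ ^ n * D)) • x : EuclideanSpace ℝ (Fin n))‖ ^ 2) S := by
    apply ContinuousOn.pow
    apply ContinuousOn.norm
    refine ContinuousOn.fun_smul ?_ continuousOn_id
    refine continuousOn_const.div
      (((continuous_norm.pow n).continuousOn).mul continuousOn_const) ?_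
    intro x hx
    have h1 : 0 < ‖x‖ := lt_of_lt_of_le hr (hnorm x hx)
    have : (‖x‖ : ℝ) ^ n ≠ 0 := by positivity
    exact mul_ne_zero this hD
  refine (hcont.integrableOn_compact hS).mono_set ?_
  intro y hy
  refine ⟨?_, ?_⟩
  · rw [Metric.mem_closedBall, dist_zero_right]; exact le_of_lt hy.2
  · rw [Metric.mem_ball, dist_zero_right, not_lt]; exact le_of_lt hy.1
/-- For `n ≥ 3` and `0 < r < ε`, the corrector profile
`ρ(x) = (r^{2−n} − ‖x‖^{2−n})/(r^{2−n} − ε^{2−n})` on the annulus `A_{r,ε} ⊆ ℝⁿ`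
has gradient `∇ρ(x) = (n−2)·x/(‖x‖ⁿ·(r^{2−n} − ε^{2−n}))` there, and its Dirichlet
energy equals `n·ω_n·(n−2)/(r^{2−n} − ε^{2−n})`, where `ω_n` is the volume of the
unit ball of `ℝⁿ`. Consequently, for an open bounded set `Ω₀ ⊆ ℝⁿ` containing the
origin and a family `0 < r_ε < ε` with `r_ε/ε^{n/(n−2)} → 0` as `ε → 0⁺`, the
corrector `ω^ε` (equal to `0` on `B_{r_ε}`, to `ρ` on `A_{r_ε,ε}`, and to `1`
outside `B_ε`) satisfies `∫_{Ω₀} ‖∇ω^ε‖² → 0` and `∫_{Ω₀} (ω^ε)² → |Ω₀|`. -/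
theorem stmt13 (n : ℕ) (hn : 3 ≤ n) :
    (∀ r ε : ℝ, 0 < r → r < ε →
      (∀ x : EuclideanSpace ℝ (Fin n), r < ‖x‖ → ‖x‖ < ε →
        gradient (fun y : EuclideanSpace ℝ (Fin n) =>
            (r ^ (2 - (n : ℝ)) - ‖y‖ ^ (2 - (n : ℝ)))
              / (r ^ (2 - (n : ℝ)) - ε ^ (2 - (n : ℝ)))) x
          = (((n : ℝ) - 2) / (‖x‖ ^ n * (r ^ (2 - (n : ℝ)) - ε ^ (2 - (n : ℝ))))) • x) ∧
      (∫ x in {y : EuclideanSpace ℝ (Fin n) | r < ‖y‖ ∧ ‖y‖ < ε},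
          ‖gradient (fun y : EuclideanSpace ℝ (Fin n) =>
              (r ^ (2 - (n : ℝ)) - ‖y‖ ^ (2 - (n : ℝ)))
                / (r ^ (2 - (n : ℝ)) - ε ^ (2 - (n : ℝ)))) x‖ ^ 2)
        = (n : ℝ) * (volume (Metric.ball (0 : EuclideanSpace ℝ (Fin n)) 1)).toReal
            * ((n : ℝ) - 2) / (r ^ (2 - (n : ℝ)) - ε ^ (2 - (n : ℝ)))) ∧
    (∀ Ω₀ : Set (EuclideanSpace ℝ (Fin n)), IsOpen Ω₀ → Bornology.IsBounded Ω₀ →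
      (0 : EuclideanSpace ℝ (Fin n)) ∈ Ω₀ →
      ∀ rε : ℝ → ℝ, (∀ ε : ℝ, 0 < ε → 0 < rε ε ∧ rε ε < ε) →
      Tendsto (fun ε : ℝ => rε ε / ε ^ ((n : ℝ) / ((n : ℝ) - 2)))
        (nhdsWithin 0 (Set.Ioi 0)) (nhds 0) →
      (Tendsto (fun ε : ℝ =>
          ∫ x in Ω₀,
            ‖gradient (fun y : EuclideanSpace ℝ (Fin n) =>
                (if ‖y‖ ≤ rε ε then (0 : ℝ)
                 else if ‖y‖ < ε then
                   (rε ε ^ (2 - (n : ℝ)) - ‖y‖ ^ (2 - (n : ℝ)))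
                     / (rε ε ^ (2 - (n : ℝ)) - ε ^ (2 - (n : ℝ)))
                 else 1)) x‖ ^ 2)
        (nhdsWithin 0 (Set.Ioi 0)) (nhds 0) ∧
      Tendsto (fun ε : ℝ =>
          ∫ x in Ω₀,
            ((if ‖x‖ ≤ rε ε then (0 : ℝ)
              else if ‖x‖ < ε then
                (rε ε ^ (2 - (n : ℝ)) - ‖x‖ ^ (2 - (n : ℝ)))
                  / (rε ε ^ (2 - (n : ℝ)) - ε ^ (2 - (n : ℝ)))
              else 1)) ^ 2)
        (nhdsWithin 0 (Set.Ioi 0)) (nhds (volume Ω₀).toReal))) := by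
  haveI := aux_dim_pos hn
  have hn3 : (3:ℝ) ≤ (n:ℝ) := by exact_mod_cast hn
  have hn2 : (0:ℝ) < (n:ℝ) - 2 := by linarith
  constructor
  · -- parts 1 and 2
    intro r ε hr hre
    have hgrad : ∀ x : EuclideanSpace ℝ (Fin n), r < ‖x‖ → ‖x‖ < ε →
        gradient (fun y : EuclideanSpace ℝ (Fin n) =>
            (r ^ (2 - (n : ℝ)) - ‖y‖ ^ (2 - (n : ℝ)))
              / (r ^ (2 - (n : ℝ)) - ε ^ (2 - (n : ℝ)))) x
          = (((n : ℝ) - 2) / (‖x‖ ^ n * (r ^ (2 - (n : ℝ)) - ε ^ (2 - (n : ℝ))))) • x := by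
      intro x hx1 _
      exact (aux_hasGradientAt_rho r ε x (norm_pos_iff.1 (hr.trans hx1))).gradient
    refine ⟨hgrad, ?_⟩
    have hAmeas : MeasurableSet {y : EuclideanSpace ℝ (Fin n) | r < ‖y‖ ∧ ‖y‖ < ε} :=
      measurable_norm (measurableSet_Ioo (a := r) (b := ε))
    rw [setIntegral_congr_fun hAmeas (fun x hx => by rw [hgrad x hx.1 hx.2])]
    exact aux_energy hn hr hre
  · -- part 3
    intro Ω₀ hΩopen hΩbdd hΩ0 rε hpos hlim
    set c : ℝ := (volume (Metric.ball (0 : EuclideanSpace ℝ (Fin n)) 1)).toReal with hc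
    have hmem : ∀ᶠ ε in nhdsWithin (0:ℝ) (Set.Ioi 0), ε ∈ Set.Ioi (0:ℝ) :=
      self_mem_nhdsWithin
    have idt : Tendsto (fun ε : ℝ => ε) (nhdsWithin (0:ℝ) (Set.Ioi 0)) (nhds 0) :=
      tendsto_id.mono_left nhdsWithin_le_nhds
    -- rε ε / ε → 0
    have hq : (0:ℝ) < (n:ℝ)/((n:ℝ)-2) - 1 := by
      have : (n:ℝ)/((n:ℝ)-2) - 1 = 2/((n:ℝ)-2) := by
        field_simp
        ring
      rw [this]; positivity
    have h2t : Tendsto (fun t : ℝ => t ^ ((n:ℝ)/((n:ℝ)-2) - 1)) (nhds (0:ℝ)) (nhds 0) := by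
      have := (Real.continuousAt_rpow_const 0 ((n:ℝ)/((n:ℝ)-2) - 1) (Or.inr hq.le)).tendsto
      rwa [Real.zero_rpow (ne_of_gt hq)] at this
    have hratio : Tendsto (fun ε : ℝ => rε ε / ε) (nhdsWithin (0:ℝ) (Set.Ioi 0)) (nhds 0) := by
      have hprod := hlim.mul (h2t.comp idt)
      rw [mul_zero] at hprod
      refine hprod.congr' ?_
      filter_upwards [hmem] with ε hε
      have hε0 : (0:ℝ) < ε := hε
      have hεq : ε ^ ((n:ℝ)/((n:ℝ)-2)) ≠ 0 := by positivity
      show rε ε / ε ^ ((n:ℝ)/((n:ℝ)-2)) * ε ^ ((n:ℝ)/((n:ℝ)-2) - 1) = rε ε / ε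
      rw [div_mul_eq_mul_div, div_eq_div_iff hεq (ne_of_gt hε0), mul_assoc,
        ← Real.rpow_add_one (ne_of_gt hε0), sub_add_cancel]
    -- rε → 0 within Ioi 0
    have hr0 : Tendsto rε (nhdsWithin (0:ℝ) (Set.Ioi 0)) (nhds 0) := by
      refine squeeze_zero' ?_ ?_ idt
      · filter_upwards [hmem] with ε hε; exact (hpos ε hε).1.le
      · filter_upwards [hmem] with ε hε; exact (hpos ε hε).2.le
    have hrmem : ∀ᶠ ε in nhdsWithin (0:ℝ) (Set.Ioi 0), rε ε ∈ Set.Ioi (0:ℝ) := by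
      filter_upwards [hmem] with ε hε; exact (hpos ε hε).1
    -- rε ^ (2 - n) → ∞
    have hrpow : Tendsto (fun ε : ℝ => rε ε ^ (2 - (n:ℝ)))
        (nhdsWithin (0:ℝ) (Set.Ioi 0)) atTop := by
      have hrinv : Tendsto (fun ε : ℝ => (rε ε)⁻¹) (nhdsWithin (0:ℝ) (Set.Ioi 0)) atTop :=
        tendsto_inv_nhdsGT_zero.comp (tendsto_nhdsWithin_iff.2 ⟨hr0, hrmem⟩)
      have hcomp := (tendsto_rpow_atTop hn2).comp hrinv
      refine hcomp.congr' ?_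
      filter_upwards [hrmem] with ε hε
      show ((rε ε)⁻¹) ^ ((n:ℝ) - 2) = rε ε ^ (2 - (n:ℝ))
      rw [Real.inv_rpow (le_of_lt hε), ← Real.rpow_neg (le_of_lt hε)]
      congr 1; ring
    -- 1 - (rε/ε)^(n-2) → 1
    have hfac : Tendsto (fun ε : ℝ => 1 - (rε ε / ε) ^ ((n:ℝ) - 2))
        (nhdsWithin (0:ℝ) (Set.Ioi 0)) (nhds 1) := by
      have hpow0 : Tendsto (fun ε : ℝ => (rε ε / ε) ^ ((n:ℝ) - 2))
          (nhdsWithin (0:ℝ) (Set.Ioi 0)) (nhds 0) := by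
        have hcont := (Real.continuousAt_rpow_const 0 ((n:ℝ) - 2) (Or.inr hn2.le)).tendsto
        rw [Real.zero_rpow (ne_of_gt hn2)] at hcont
        exact hcont.comp hratio
      have := tendsto_const_nhds (α := ℝ) (x := (1:ℝ))
        (f := nhdsWithin (0:ℝ) (Set.Ioi 0)) |>.sub hpow0
      simpa using this
    -- D → ∞
    have hDtop : Tendsto (fun ε : ℝ => rε ε ^ (2 - (n:ℝ)) - ε ^ (2 - (n:ℝ)))
        (nhdsWithin (0:ℝ) (Set.Ioi 0)) atTop := by
      have hmul := hrpow.atTop_mul_pos zero_lt_one hfac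
      refine hmul.congr' ?_
      filter_upwards [hmem] with ε hε
      have hε0 : (0:ℝ) < ε := hε
      obtain ⟨h1, _⟩ := hpos ε hε
      show rε ε ^ (2 - (n:ℝ)) * (1 - (rε ε / ε) ^ ((n:ℝ) - 2))
          = rε ε ^ (2 - (n:ℝ)) - ε ^ (2 - (n:ℝ))
      rw [mul_sub, mul_one]
      congr 1
      rw [Real.div_rpow h1.le hε0.le, mul_div_assoc', ← Real.rpow_add h1,
        show (2 - (n:ℝ)) + ((n:ℝ) - 2) = 0 by ring, Real.rpow_zero,
        show (2 - (n:ℝ)) = -((n:ℝ) - 2) by ring, Real.rpow_neg hε0.le, one_div]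
    -- energy bound tends to 0
    have hE0 : Tendsto (fun ε : ℝ => (n:ℝ) * c * ((n:ℝ) - 2)
          / (rε ε ^ (2 - (n:ℝ)) - ε ^ (2 - (n:ℝ))))
        (nhdsWithin (0:ℝ) (Set.Ioi 0)) (nhds 0) := by
      have := (tendsto_inv_atTop_zero.comp hDtop).const_mul ((n:ℝ) * c * ((n:ℝ) - 2))
      rw [mul_zero] at this
      simpa [div_eq_mul_inv] using this
    have hDposE : ∀ ε : ℝ, 0 < ε → (0:ℝ) < rε ε ^ (2 - (n:ℝ)) - ε ^ (2 - (n:ℝ)) := by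
      intro ε hε
      obtain ⟨h1, h2⟩ := hpos ε hε
      exact sub_pos.2 (Real.rpow_lt_rpow_of_neg h1 h2 (by linarith))
    constructor
    · -- energy → 0
      refine tendsto_of_tendsto_of_tendsto_of_le_of_le' tendsto_const_nhds hE0 ?_ ?_
      · exact Eventually.of_forall fun ε => integral_nonneg fun x => by positivity
      · filter_upwards [hmem] with ε hε
        obtain ⟨h1, h2⟩ := hpos ε hε
        have hε0 : (0:ℝ) < ε := hε
        have hDpos := hDposE ε hε
        set r : ℝ := rε ε with hrdef
        set D : ℝ := r ^ (2 - (n:ℝ)) - ε ^ (2 - (n:ℝ)) with hDdef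
        set A : Set (EuclideanSpace ℝ (Fin n)) := {y | r < ‖y‖ ∧ ‖y‖ < ε} with hAdef
        have hAmeas : MeasurableSet A :=
          measurable_norm (measurableSet_Ioo (a := r) (b := ε))
        have hAopen : IsOpen A := by
          have : A = (fun y : EuclideanSpace ℝ (Fin n) => ‖y‖) ⁻¹' (Set.Ioo r ε) := rfl
          rw [this]; exact isOpen_Ioo.preimage continuous_norm
        have key : ∀ᵐ x : EuclideanSpace ℝ (Fin n),
            ‖gradient (fun y : EuclideanSpace ℝ (Fin n) =>
                (if ‖y‖ ≤ r then (0 : ℝ)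
                 else if ‖y‖ < ε then
                   (r ^ (2 - (n : ℝ)) - ‖y‖ ^ (2 - (n : ℝ)))
                     / (r ^ (2 - (n : ℝ)) - ε ^ (2 - (n : ℝ)))
                 else 1)) x‖ ^ 2
            = A.indicator (fun x : EuclideanSpace ℝ (Fin n) =>
                ‖((((n : ℝ) - 2) / (‖x‖ ^ n * D)) • x : EuclideanSpace ℝ (Fin n))‖ ^ 2) x := by
          have hs1 : ∀ᵐ x : EuclideanSpace ℝ (Fin n) ∂volume,
              x ∉ Metric.sphere (0 : EuclideanSpace ℝ (Fin n)) r :=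
            measure_eq_zero_iff_ae_notMem.mp (Measure.addHaar_sphere volume 0 r)
          have hs2 : ∀ᵐ x : EuclideanSpace ℝ (Fin n) ∂volume,
              x ∉ Metric.sphere (0 : EuclideanSpace ℝ (Fin n)) ε :=
            measure_eq_zero_iff_ae_notMem.mp (Measure.addHaar_sphere volume 0 ε)
          filter_upwards [hs1, hs2] with x hx1 hx2
          rcases lt_trichotomy ‖x‖ r with hcase | hcase | hcase
          · have hev : (fun y : EuclideanSpace ℝ (Fin n) =>
                (if ‖y‖ ≤ r then (0 : ℝ)
                 else if ‖y‖ < ε then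
                   (r ^ (2 - (n : ℝ)) - ‖y‖ ^ (2 - (n : ℝ)))
                     / (r ^ (2 - (n : ℝ)) - ε ^ (2 - (n : ℝ)))
                 else 1)) =ᶠ[nhds x] (fun _ => (0:ℝ)) := by
              filter_upwards [Metric.isOpen_ball.mem_nhds
                (show x ∈ Metric.ball (0 : EuclideanSpace ℝ (Fin n)) r by
                  rwa [mem_ball_zero_iff])] with y hy
              rw [if_pos (le_of_lt (mem_ball_zero_iff.1 hy))]
            rw [aux_gradient_congr hev, gradient_fun_const]
            rw [Set.indicator_of_notMem (fun hA => absurd hA.1 (not_lt.2 hcase.le))]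
            simp
          · exact absurd (by rwa [mem_sphere_zero_iff_norm]) hx1
          · rcases lt_trichotomy ‖x‖ ε with hc2 | hc2 | hc2
            · have hxA : x ∈ A := ⟨hcase, hc2⟩
              have hev : (fun y : EuclideanSpace ℝ (Fin n) =>
                  (if ‖y‖ ≤ r then (0 : ℝ)
                   else if ‖y‖ < ε then
                     (r ^ (2 - (n : ℝ)) - ‖y‖ ^ (2 - (n : ℝ)))
                       / (r ^ (2 - (n : ℝ)) - ε ^ (2 - (n : ℝ)))
                   else 1)) =ᶠ[nhds x] (fun y : EuclideanSpace ℝ (Fin n) =>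
                     (r ^ (2 - (n : ℝ)) - ‖y‖ ^ (2 - (n : ℝ)))
                       / (r ^ (2 - (n : ℝ)) - ε ^ (2 - (n : ℝ)))) := by
                filter_upwards [hAopen.mem_nhds hxA] with y hy
                rw [if_neg (not_le.2 hy.1), if_pos hy.2]
              have hx0 : x ≠ 0 := norm_pos_iff.1 (h1.trans hcase)
              rw [aux_gradient_congr hev, (aux_hasGradientAt_rho r ε x hx0).gradient,
                Set.indicator_of_mem hxA]
            · exact absurd (by rwa [mem_sphere_zero_iff_norm]) hx2
            · have hopen : IsOpen {y : EuclideanSpace ℝ (Fin n) | ε < ‖y‖} :=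
                isOpen_lt continuous_const continuous_norm
              have hev : (fun y : EuclideanSpace ℝ (Fin n) =>
                  (if ‖y‖ ≤ r then (0 : ℝ)
                   else if ‖y‖ < ε then
                     (r ^ (2 - (n : ℝ)) - ‖y‖ ^ (2 - (n : ℝ)))
                       / (r ^ (2 - (n : ℝ)) - ε ^ (2 - (n : ℝ)))
                   else 1)) =ᶠ[nhds x] (fun _ => (1:ℝ)) := by
                filter_upwards [hopen.mem_nhds hc2] with y hy
                rw [if_neg (not_le.2 (h2.trans hy)), if_neg (not_lt.2 hy.le)]
              rw [aux_gradient_congr hev, gradient_fun_const]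
              rw [Set.indicator_of_notMem (fun hA => absurd hA.2 (not_lt.2 hc2.le))]
              simp
        calc (∫ x in Ω₀, ‖gradient (fun y : EuclideanSpace ℝ (Fin n) =>
                (if ‖y‖ ≤ r then (0 : ℝ)
                 else if ‖y‖ < ε then
                   (r ^ (2 - (n : ℝ)) - ‖y‖ ^ (2 - (n : ℝ)))
                     / (r ^ (2 - (n : ℝ)) - ε ^ (2 - (n : ℝ)))
                 else 1)) x‖ ^ 2)
            = ∫ x in Ω₀, A.indicator (fun x : EuclideanSpace ℝ (Fin n) =>
                ‖((((n : ℝ) - 2) / (‖x‖ ^ n * D)) • x : EuclideanSpace ℝ (Fin n))‖ ^ 2) x :=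
              integral_congr_ae (ae_restrict_of_ae key)
          _ = ∫ x in Ω₀ ∩ A,
                ‖((((n : ℝ) - 2) / (‖x‖ ^ n * D)) • x : EuclideanSpace ℝ (Fin n))‖ ^ 2 := by
              rw [setIntegral_indicator hAmeas]
          _ ≤ ∫ x in A,
                ‖((((n : ℝ) - 2) / (‖x‖ ^ n * D)) • x : EuclideanSpace ℝ (Fin n))‖ ^ 2 :=
              setIntegral_mono_set (aux_integrableOn h1 h2 (ne_of_gt hDpos))
                (Eventually.of_forall fun x => by positivity)
                (HasSubset.Subset.eventuallyLE Set.inter_subset_right)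
          _ = (n:ℝ) * c * ((n:ℝ) - 2) / D := aux_energy hn h1 h2
    · -- mass → volume
      have hvol : Tendsto (fun ε : ℝ =>
          (volume (Metric.closedBall (0 : EuclideanSpace ℝ (Fin n)) ε)).toReal)
          (nhdsWithin (0:ℝ) (Set.Ioi 0)) (nhds 0) := by
        have hcont : Tendsto (fun ε : ℝ => ε ^ n * c) (nhdsWithin (0:ℝ) (Set.Ioi 0)) (nhds 0) := by
          have h' : Tendsto (fun t : ℝ => t ^ n * c) (nhds 0) (nhds ((0:ℝ) ^ n * c)) :=
            (((continuous_pow n).mul continuous_const).tendsto (0:ℝ))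
          rw [zero_pow (by omega : n ≠ 0), zero_mul] at h'
          exact h'.mono_left nhdsWithin_le_nhds
        refine hcont.congr' ?_
        filter_upwards [hmem] with ε hε
        have hε0 : (0:ℝ) < ε := hε
        rw [Measure.addHaar_closedBall volume _ (le_of_lt hε), ENNReal.toReal_mul,
          ENNReal.toReal_ofReal (by positivity), finrank_euclideanSpace_fin]
      rw [← tendsto_sub_nhds_zero_iff]
      apply squeeze_zero_norm' ?_ hvol
      filter_upwards [hmem] with ε hε
      obtain ⟨h1, h2⟩ := hpos ε hε
      have hε0 : (0:ℝ) < ε := hε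
      have hDpos := hDposE ε hε
      set r : ℝ := rε ε with hrdef
      set w : EuclideanSpace ℝ (Fin n) → ℝ := fun x =>
        (if ‖x‖ ≤ r then (0 : ℝ)
         else if ‖x‖ < ε then
           (r ^ (2 - (n : ℝ)) - ‖x‖ ^ (2 - (n : ℝ)))
             / (r ^ (2 - (n : ℝ)) - ε ^ (2 - (n : ℝ)))
         else 1) with hwdef
      have hΩfin : volume Ω₀ ≠ ⊤ := hΩbdd.measure_lt_top.ne
      have hw : Measurable w := by
        refine Measurable.ite (measurableSet_le measurable_norm measurable_const)
          measurable_const ?_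
        refine Measurable.ite (measurableSet_lt measurable_norm measurable_const) ?_
          measurable_const
        exact (measurable_const.sub (measurable_norm.pow measurable_const)).div_const _
      have hbound : ∀ x : EuclideanSpace ℝ (Fin n), 0 ≤ w x ∧ w x ≤ 1 := by
        intro x
        rw [hwdef]
        by_cases ha : ‖x‖ ≤ r
        · simp [ha]
        · by_cases hb : ‖x‖ < ε
          · simp only [if_neg ha, if_pos hb]
            have hx1 : r < ‖x‖ := not_le.1 ha
            have hnum1 : ‖x‖ ^ (2 - (n:ℝ)) ≤ r ^ (2 - (n:ℝ)) :=
              Real.rpow_le_rpow_of_nonpos h1 hx1.le (by linarith)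
            have hnum2 : ε ^ (2 - (n:ℝ)) ≤ ‖x‖ ^ (2 - (n:ℝ)) :=
              Real.rpow_le_rpow_of_nonpos (h1.trans hx1) hb.le (by linarith)
            constructor
            · exact div_nonneg (by linarith) hDpos.le
            · rw [div_le_one hDpos]; linarith
          · simp only [if_neg ha, if_neg hb]; norm_num
      have hint1 : IntegrableOn (fun x => (w x) ^ 2) Ω₀ := by
        refine Integrable.mono' ((integrableOn_const_iff (C := (1:ℝ))).2 (Or.inr hΩbdd.measure_lt_top))
          ((hw.pow_const 2).aestronglyMeasurable) ?_
        refine Eventually.of_forall fun x => ?_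
        rw [Real.norm_eq_abs, abs_of_nonneg (by positivity)]
        have h1' := (hbound x).1
        have h2' := (hbound x).2
        nlinarith
      have hintc : IntegrableOn (fun _ : EuclideanSpace ℝ (Fin n) => (1:ℝ)) Ω₀ :=
        (integrableOn_const_iff (C := (1:ℝ))).2 (Or.inr hΩbdd.measure_lt_top)
      have heq : (∫ x in Ω₀, (w x) ^ 2) - (volume Ω₀).toReal
          = ∫ x in Ω₀, ((w x) ^ 2 - 1) := by
        rw [integral_sub hint1 hintc, setIntegral_const, smul_eq_mul, mul_one, measureReal_def]
      have hint2 : IntegrableOn (fun x => (w x) ^ 2 - 1) Ω₀ := hint1.sub hintc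
      calc ‖(∫ x in Ω₀, (w x) ^ 2) - (volume Ω₀).toReal‖
          = ‖∫ x in Ω₀, ((w x) ^ 2 - 1)‖ := by rw [heq]
        _ ≤ ∫ x in Ω₀, ‖(w x) ^ 2 - 1‖ := norm_integral_le_integral_norm _
        _ ≤ ∫ x in Ω₀, (Metric.closedBall (0 : EuclideanSpace ℝ (Fin n)) ε).indicator
              (fun _ => (1:ℝ)) x := by
            refine integral_mono hint2.norm
              (hintc.indicator (measurableSet_closedBall)) ?_
            intro x
            dsimp only
            by_cases hx : ‖x‖ ≤ ε
            · rw [Set.indicator_of_mem (by rwa [Metric.mem_closedBall, dist_zero_right])]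
              rw [Real.norm_eq_abs, abs_le]
              have h1' := (hbound x).1
              have h2' := (hbound x).2
              constructor <;> nlinarith
            · rw [Set.indicator_of_notMem (by rwa [Metric.mem_closedBall, dist_zero_right])]
              have hx' : ε < ‖x‖ := not_le.1 hx
              have : w x = 1 := by
                rw [hwdef]
                simp only
                rw [if_neg (not_le.2 (h2.trans hx')), if_neg (not_lt.2 hx'.le)]
              rw [this]
              norm_num
        _ = (volume (Ω₀ ∩ Metric.closedBall (0 : EuclideanSpace ℝ (Fin n)) ε)).toReal := by
            rw [setIntegral_indicator measurableSet_closedBall, setIntegral_const,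
              smul_eq_mul, mul_one, measureReal_def]
        _ ≤ (volume (Metric.closedBall (0 : EuclideanSpace ℝ (Fin n)) ε)).toReal :=
            ENNReal.toReal_mono measure_closedBall_lt_top.ne
              (measure_mono Set.inter_subset_right)
end
end
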